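/- Let (V, ‖·‖_V) and (Q, ‖·‖_Q) be ℝ^k and ℝ^n equipped with norms induced by inner products. Let ã : V × V → ℝ be a symmetric bilinear form and b : V × Q → ℝ a bilinear form, and let c_c, c_d, c₃ > 0 be constants such that: (i) |ã(u, v)| ≤ c_d ‖u‖_V ‖v‖_V for all u, v ∈ V; (ii) ã(v, v) ≥ c_c ‖v‖_V² for all v ∈ V; (iii) for every p ∈ Q there exists ṽ ∈ V with b(ṽ, p) = ‖p‖_Q² and ‖ṽ‖_V ≤ c₃⁻¹ ‖p‖_Q. Define a((u, p), (v, q)) := ã(u, v) + b(v, p) + b(u, q) on (V × Q) × (V × Q) and ‖(u, p)‖² := ‖u‖_V² + ‖p‖_Q². Then, with c_{s1} := (c_c/2)·min(1, c₃²/c_d²) and c_{s2} := (max(2, 1 + 2c_c²c₃²/c_d⁴))^{1/2}, for every (u, p) ∈ V × Q there exists (v, q) ∈ V × Q, nonzero when (u, p) ≠ 0, with a((u, p), (v, q)) ≥ (c_{s1}/c_{s2}) ‖(u, p)‖ ‖(v, q)‖. -/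

import Mathlib

open Matrix

/-- The norm on `k → ℝ` induced by a (positive definite) matrix `M`:
`‖x‖_M = (xᵀ M x)^{1/2}`. -/
noncomputable def mnorm {k : Type*} [Fintype k] (M : Matrix k k ℝ) (x : k → ℝ) : ℝ :=
  Real.sqrt (x ⬝ᵥ M.mulVec x)

section helpers
variable {k : Type*} [Fintype k] {M : Matrix k k ℝ}

lemma mnorm_nonneg (x : k → ℝ) : 0 ≤ mnorm M x := Real.sqrt_nonneg _

lemma quad_nonneg (hM : M.PosDef) (x : k → ℝ) : 0 ≤ x ⬝ᵥ M.mulVec x := by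
  simpa using hM.posSemidef.re_dotProduct_nonneg x

lemma mnorm_sq (hM : M.PosDef) (x : k → ℝ) : mnorm M x ^ 2 = x ⬝ᵥ M.mulVec x :=
  Real.sq_sqrt (quad_nonneg hM x)

lemma mnorm_eq_zero (hM : M.PosDef) {x : k → ℝ} (h : mnorm M x = 0) : x = 0 := by
  by_contra hx
  have h1 : 0 < x ⬝ᵥ M.mulVec x := by simpa using hM.re_dotProduct_pos hx
  have h2 := mnorm_sq hM x
  rw [h] at h2
  simp at h2
  linarith

lemma mnorm_neg (x : k → ℝ) : mnorm M (-x) = mnorm M x := by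
  simp [mnorm, mulVec_neg]

lemma mnorm_cs (hM : M.PosDef) (x y : k → ℝ) :
    x ⬝ᵥ M.mulVec y ≤ mnorm M x * mnorm M y := by
  letI nacg := M.toSeminormedAddCommGroup hM.posSemidef
  letI ips := M.toInnerProductSpace hM.posSemidef
  have h := @real_inner_mul_inner_self_le (k → ℝ) nacg ips x y
  have hi : ∀ a b : k → ℝ, (@inner ℝ (k → ℝ) ips.toInner a b) = a ⬝ᵥ M.mulVec b := by
    intro a b
    show M.mulVec b ⬝ᵥ star a = a ⬝ᵥ M.mulVec b
    simp [dotProduct_comm]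
  rw [hi x y, hi x x, hi y y] at h
  calc x ⬝ᵥ M.mulVec y ≤ |x ⬝ᵥ M.mulVec y| := le_abs_self _
    _ = Real.sqrt ((x ⬝ᵥ M.mulVec y) * (x ⬝ᵥ M.mulVec y)) := (Real.sqrt_mul_self_eq_abs _).symm
    _ ≤ Real.sqrt ((x ⬝ᵥ M.mulVec x) * (y ⬝ᵥ M.mulVec y)) := Real.sqrt_le_sqrt h
    _ = mnorm M x * mnorm M y := Real.sqrt_mul (quad_nonneg hM x) _

end helpers

set_option maxHeartbeats 1600000 in
/-- Abstract core of Lemma 5.2 (uniform inf-sup stability of the saddle-point form):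
given a bounded coercive symmetric form `ã` on `V = ℝᵏ` and a bilinear form `b` on
`V × Q` satisfying the inf-sup condition, the saddle-point form
`a((u,p),(v,q)) = ã(u,v) + b(v,p) + b(u,q)` satisfies a uniform inf-sup condition on
`V × Q` with constant `c_{s1}/c_{s2}`.  Here `V` and `Q` carry the inner-product norms
induced by the positive definite matrices `MV` and `MQ`, the symmetric bilinear form
`ã` is represented by the symmetric matrix `At`, and `b` by the matrix `Bm`. -/
theorem saddle_point_inf_sup
    (k n : ℕ)
    (MV : Matrix (Fin k) (Fin k) ℝ) (hMV : MV.PosDef)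
    (MQ : Matrix (Fin n) (Fin n) ℝ) (hMQ : MQ.PosDef)
    (At : Matrix (Fin k) (Fin k) ℝ) (hAt : At.IsSymm)
    (Bm : Matrix (Fin k) (Fin n) ℝ)
    (cc cd c₃ : ℝ) (hcc : 0 < cc) (hcd : 0 < cd) (hc₃ : 0 < c₃)
    -- (i) boundedness of ã
    (hbound : ∀ u v : Fin k → ℝ, |u ⬝ᵥ At.mulVec v| ≤ cd * mnorm MV u * mnorm MV v)
    -- (ii) coercivity of ã
    (hcoerc : ∀ v : Fin k → ℝ, cc * (mnorm MV v) ^ 2 ≤ v ⬝ᵥ At.mulVec v)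
    -- (iii) inf-sup condition for b
    (hinfsup : ∀ p : Fin n → ℝ, ∃ vt : Fin k → ℝ,
      vt ⬝ᵥ Bm.mulVec p = (mnorm MQ p) ^ 2 ∧ mnorm MV vt ≤ c₃⁻¹ * mnorm MQ p) :
    ∀ (u : Fin k → ℝ) (p : Fin n → ℝ), ∃ (v : Fin k → ℝ) (q : Fin n → ℝ),
      ((u, p) ≠ 0 → (v, q) ≠ 0) ∧
      ((cc / 2) * min 1 (c₃ ^ 2 / cd ^ 2)) /
          Real.sqrt (max 2 (1 + 2 * cc ^ 2 * c₃ ^ 2 / cd ^ 4)) *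
          Real.sqrt ((mnorm MV u) ^ 2 + (mnorm MQ p) ^ 2) *
          Real.sqrt ((mnorm MV v) ^ 2 + (mnorm MQ q) ^ 2) ≤
        u ⬝ᵥ At.mulVec v + v ⬝ᵥ Bm.mulVec p + u ⬝ᵥ Bm.mulVec q := by
  intro u p
  obtain ⟨w, hw1, hw2⟩ := hinfsup p
  set δ : ℝ := cc * c₃ ^ 2 / cd ^ 2 with hδ
  have hδpos : 0 < δ := by positivity
  set a : ℝ := mnorm MV u with ha
  set b : ℝ := mnorm MQ p with hb
  set t : ℝ := mnorm MV w with ht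
  have hann : 0 ≤ a := mnorm_nonneg u
  have hbnn : 0 ≤ b := mnorm_nonneg p
  have htnn : 0 ≤ t := mnorm_nonneg w
  refine ⟨u + δ • w, -p, ?_, ?_⟩
  · -- nonvanishing
    intro h0 hvq
    apply h0
    rw [Prod.ext_iff] at hvq ⊢
    obtain ⟨hv0, hq0⟩ := hvq
    have hp0 : p = 0 := by simpa using hq0
    have hb0 : b = 0 := by
      rw [hb, hp0]
      simp [mnorm]
    have hw0 : w = 0 := by
      apply mnorm_eq_zero hMV
      have : mnorm MV w ≤ 0 := by rw [← ht]; rw [hb0] at hw2; simpa using hw2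
      exact le_antisymm this (mnorm_nonneg w)
    have hu0 : u = 0 := by simpa [hw0] using hv0
    exact ⟨hu0, hp0⟩
  · -- the inequality
    set v : Fin k → ℝ := u + δ • w with hv
    -- value of the saddle-point form
    have hSe : u ⬝ᵥ At.mulVec v + v ⬝ᵥ Bm.mulVec p + u ⬝ᵥ Bm.mulVec (-p)
        = u ⬝ᵥ At.mulVec u + δ * (u ⬝ᵥ At.mulVec w) + δ * b ^ 2 := by
      rw [hv, ← hw1]
      simp [mulVec_add, mulVec_smul, dotProduct_add, dotProduct_smul, add_dotProduct,
        smul_dotProduct, mulVec_neg, dotProduct_neg, smul_eq_mul]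
      ring
    -- lower bound on the form
    have hAuw : -(δ * (cd * a * (c₃⁻¹ * b))) ≤ δ * (u ⬝ᵥ At.mulVec w) := by
      have h1 : |u ⬝ᵥ At.mulVec w| ≤ cd * a * t := hbound u w
      have h2 : cd * a * t ≤ cd * a * (c₃⁻¹ * b) := by
        have : (0:ℝ) ≤ cd * a := by positivity
        exact mul_le_mul_of_nonneg_left hw2 this
      have h3 : -(cd * a * (c₃⁻¹ * b)) ≤ u ⬝ᵥ At.mulVec w := by
        have := neg_abs_le (u ⬝ᵥ At.mulVec w)
        linarith
      nlinarith [mul_le_mul_of_nonneg_left h3 hδpos.le]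
    have hYoung : δ * (cd * a * (c₃⁻¹ * b)) ≤ cc / 2 * a ^ 2 + δ / 2 * b ^ 2 := by
      have h1 : δ * (cd * a * (c₃⁻¹ * b)) = cc * (c₃ / cd) * (a * b) := by
        rw [hδ]; field_simp
      have h2 : δ / 2 = cc / 2 * (c₃ / cd) ^ 2 := by
        rw [hδ]; field_simp
      rw [h1, h2]
      nlinarith [mul_nonneg (by positivity : (0:ℝ) ≤ cc / 2) (sq_nonneg (a - c₃ / cd * b))]
    have hlow : cc / 2 * a ^ 2 + δ / 2 * b ^ 2
        ≤ u ⬝ᵥ At.mulVec u + δ * (u ⬝ᵥ At.mulVec w) + δ * b ^ 2 := by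
      have := hcoerc u
      linarith
    -- cs1 bound
    set m : ℝ := min 1 (c₃ ^ 2 / cd ^ 2) with hm
    have hmpos : 0 < m := lt_min one_pos (by positivity)
    have hcs1 : cc / 2 * m * (a ^ 2 + b ^ 2) ≤ cc / 2 * a ^ 2 + δ / 2 * b ^ 2 := by
      have h2 : δ / 2 = cc / 2 * (c₃ ^ 2 / cd ^ 2) := by rw [hδ]; ring
      have hm1 : m ≤ 1 := min_le_left _ _
      have hm2 : m ≤ c₃ ^ 2 / cd ^ 2 := min_le_right _ _
      rw [h2]
      nlinarith [mul_nonneg (mul_nonneg (by positivity : (0:ℝ) ≤ cc / 2)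
          (sub_nonneg.2 hm1)) (sq_nonneg a),
        mul_nonneg (mul_nonneg (by positivity : (0:ℝ) ≤ cc / 2)
          (sub_nonneg.2 hm2)) (sq_nonneg b)]
    -- upper bound on the norm of (v, q)
    have hv2 : mnorm MV v ^ 2 ≤ (a + δ * t) ^ 2 := by
      have e : v ⬝ᵥ MV.mulVec v = u ⬝ᵥ MV.mulVec u + δ * (u ⬝ᵥ MV.mulVec w)
          + δ * (w ⬝ᵥ MV.mulVec u) + δ ^ 2 * (w ⬝ᵥ MV.mulVec w) := by
        rw [hv]
        simp [mulVec_add, mulVec_smul, dotProduct_add, dotProduct_smul, add_dotProduct,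
          smul_dotProduct, smul_eq_mul]
        ring
      have c1 := mul_le_mul_of_nonneg_left (mnorm_cs hMV u w) hδpos.le
      have c2 := mul_le_mul_of_nonneg_left (mnorm_cs hMV w u) hδpos.le
      have c3 := mul_le_mul_of_nonneg_left (mnorm_cs hMV w w) (sq_nonneg δ)
      have e1 := mnorm_sq hMV u
      rw [← ha] at c1 c2 e1
      rw [← ht] at c1 c2 c3
      have expand : (a + δ * t) ^ 2
          = a ^ 2 + δ * (a * t) + δ * (t * a) + δ ^ 2 * (t * t) := by ring
      rw [mnorm_sq hMV, e, ← e1, expand]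
      linarith [c1, c2, c3]
    have htb : t ^ 2 ≤ (c₃⁻¹ * b) ^ 2 := pow_le_pow_left₀ htnn hw2 2
    have hv2' : mnorm MV v ^ 2 ≤ 2 * a ^ 2 + 2 * δ ^ 2 * (c₃⁻¹ * b) ^ 2 := by
      have h1 : (a + δ * t) ^ 2 + (a - δ * t) ^ 2 = 2 * a ^ 2 + 2 * (δ ^ 2 * t ^ 2) := by
        ring
      have h2 : δ ^ 2 * t ^ 2 ≤ δ ^ 2 * (c₃⁻¹ * b) ^ 2 :=
        mul_le_mul_of_nonneg_left htb (sq_nonneg δ)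
      linarith [hv2, sq_nonneg (a - δ * t), h1, h2]
    set C : ℝ := 2 * cc ^ 2 * c₃ ^ 2 / cd ^ 4 with hC
    have hCeq : 2 * δ ^ 2 * (c₃⁻¹ * b) ^ 2 = C * b ^ 2 := by
      rw [hδ, hC]; field_simp
    set X : ℝ := max 2 (1 + C) with hX
    have hX2 : (2:ℝ) ≤ X := le_max_left _ _
    have hXC : 1 + C ≤ X := le_max_right _ _
    have hXpos : 0 < X := lt_of_lt_of_le two_pos hX2
    have hMle : mnorm MV v ^ 2 + mnorm MQ (-p) ^ 2 ≤ X * (a ^ 2 + b ^ 2) := by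
      rw [mnorm_neg, ← hb]
      have h1 : mnorm MV v ^ 2 ≤ 2 * a ^ 2 + C * b ^ 2 := by rw [← hCeq]; exact hv2'
      have g1 : 2 * a ^ 2 ≤ X * a ^ 2 := mul_le_mul_of_nonneg_right hX2 (sq_nonneg a)
      have g2 : (1 + C) * b ^ 2 ≤ X * b ^ 2 := mul_le_mul_of_nonneg_right hXC (sq_nonneg b)
      have g3 : X * (a ^ 2 + b ^ 2) = X * a ^ 2 + X * b ^ 2 := by ring
      linarith [h1, g1, g2, g3]
    -- assemble
    have hNnn : (0:ℝ) ≤ a ^ 2 + b ^ 2 := by positivity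
    have hs2pos : 0 < Real.sqrt X := Real.sqrt_pos.2 hXpos
    have hsqrtM : Real.sqrt (mnorm MV v ^ 2 + mnorm MQ (-p) ^ 2)
        ≤ Real.sqrt X * Real.sqrt (a ^ 2 + b ^ 2) := by
      rw [← Real.sqrt_mul hXpos.le]
      exact Real.sqrt_le_sqrt hMle
    have hcs1nn : 0 ≤ cc / 2 * m := by positivity
    have hfactor : 0 ≤ cc / 2 * m / Real.sqrt X * Real.sqrt (a ^ 2 + b ^ 2) := by positivity
    calc cc / 2 * m / Real.sqrt X * Real.sqrt (a ^ 2 + b ^ 2)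
          * Real.sqrt (mnorm MV v ^ 2 + mnorm MQ (-p) ^ 2)
        ≤ cc / 2 * m / Real.sqrt X * Real.sqrt (a ^ 2 + b ^ 2)
          * (Real.sqrt X * Real.sqrt (a ^ 2 + b ^ 2)) :=
          mul_le_mul_of_nonneg_left hsqrtM hfactor
      _ = cc / 2 * m * (a ^ 2 + b ^ 2) := by
          have hx : Real.sqrt X ≠ 0 := ne_of_gt hs2pos
          have hring : cc / 2 * m / Real.sqrt X * Real.sqrt (a ^ 2 + b ^ 2)
                * (Real.sqrt X * Real.sqrt (a ^ 2 + b ^ 2))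
              = cc / 2 * m * (Real.sqrt (a ^ 2 + b ^ 2) * Real.sqrt (a ^ 2 + b ^ 2))
                * (Real.sqrt X / Real.sqrt X) := by ring
          rw [hring, div_self hx, mul_one, Real.mul_self_sqrt hNnn]
      _ ≤ cc / 2 * a ^ 2 + δ / 2 * b ^ 2 := hcs1
      _ ≤ u ⬝ᵥ At.mulVec u + δ * (u ⬝ᵥ At.mulVec w) + δ * b ^ 2 := hlow
      _ = u ⬝ᵥ At.mulVec v + v ⬝ᵥ Bm.mulVec p + u ⬝ᵥ Bm.mulVec (-p) := hSe.symm
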